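/- Let (x_k) solve the difference equation whose characteristic polynomial has distinct real roots λ_1,…,λ_n with |λ_i| ≤ ρ < 1, with initial conditions x_0 = ⋯ = x_{n-2} = 0, x_{n-1} = 1. Then |x_k| ≤ C(k, n-1) ρ^{k-n+1} for all k ≥ n. -/

import Mathlib

open Polynomial

/-- Complete homogeneous symmetric function of the entries of `l`, degree `m`. -/
def Hfun : List ℝ → ℕ → ℝ
  | [], 0 => 1
  | [], _ + 1 => 0
  | _ :: l, 0 => Hfun l 0
  | a :: l, m + 1 => a * Hfun (a :: l) m + Hfun l (m + 1)
termination_by l m => (l.length, m)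

lemma Hfun_zero : ∀ l : List ℝ, Hfun l 0 = 1 := by
  intro l
  induction l with
  | nil => simp [Hfun]
  | cons a l ih => rw [Hfun, ih]

/-- Candidate solution. -/
noncomputable def yfun (l : List ℝ) (k : ℕ) : ℝ :=
  if k + 1 < l.length then 0 else Hfun l (k + 1 - l.length)

lemma yshift (a : ℝ) (l : List ℝ) (k : ℕ) :
    yfun (a :: l) (k + 1) - a * yfun (a :: l) k = yfun l k := by
  set m := l.length with hm
  unfold yfun
  simp only [List.length_cons, ← hm]
  rcases lt_trichotomy (k + 1) m with h | h | h
  · rw [if_pos (by omega), if_pos (by omega), if_pos h]; ring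
  · rw [if_neg (by omega), if_pos (by omega), if_neg (by omega)]
    have h1 : k + 1 + 1 - (m + 1) = 0 := by omega
    have h2 : k + 1 - m = 0 := by omega
    rw [h1, h2, Hfun]
    ring
  · rw [if_neg (by omega), if_neg (by omega), if_neg (by omega)]
    have h1 : k + 1 + 1 - (m + 1) = (k - m) + 1 := by omega
    have h2 : k + 1 - (m + 1) = k - m := by omega
    have h3 : k + 1 - m = (k - m) + 1 := by omega
    rw [h1, h2, h3, Hfun]
    ring

/-- Characteristic polynomial. -/
noncomputable def Pl (l : List ℝ) : Polynomial ℝ :=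
  (l.map (fun a => Polynomial.X - Polynomial.C a)).prod

lemma Pl_monic : ∀ l : List ℝ, (Pl l).Monic := by
  intro l
  induction l with
  | nil => exact monic_one
  | cons a l ih =>
      have : Pl (a :: l) = (X - C a) * Pl l := by simp [Pl]
      rw [this]
      exact (monic_X_sub_C a).mul ih

lemma Pl_natDegree : ∀ l : List ℝ, (Pl l).natDegree = l.length := by
  intro l
  induction l with
  | nil => simp [Pl]
  | cons a l ih =>
      have h : Pl (a :: l) = (X - C a) * Pl l := by simp [Pl]
      rw [h, (monic_X_sub_C a).natDegree_mul (Pl_monic l), natDegree_X_sub_C, ih,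
        List.length_cons]
      omega

lemma rec_y : ∀ (l : List ℝ) (k : ℕ),
    ∑ j ∈ Finset.range (l.length + 1), (Pl l).coeff j * yfun l (k + j) = 0 := by
  intro l
  induction l with
  | nil =>
      intro k
      have h0 : ∀ j, yfun [] j = 0 := by
        intro j; unfold yfun; simp [Hfun]
      simp [h0]
  | cons a l ih =>
      intro k
      set m := l.length with hm
      have hP : Pl (a :: l) = X * Pl l - C a * Pl l := by
        simp [Pl]; ring
      have hlen : (a :: l).length = m + 1 := by simp [hm]
      rw [hlen, hP]
      have hsplit : ∀ j, (X * Pl l - C a * Pl l).coeff j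
          = (X * Pl l).coeff j - a * (Pl l).coeff j := by
        intro j; rw [coeff_sub, coeff_C_mul]
      calc ∑ j ∈ Finset.range (m + 1 + 1),
            (X * Pl l - C a * Pl l).coeff j * yfun (a :: l) (k + j)
          = (∑ j ∈ Finset.range (m + 1 + 1), (X * Pl l).coeff j * yfun (a :: l) (k + j))
            - a * ∑ j ∈ Finset.range (m + 1 + 1), (Pl l).coeff j * yfun (a :: l) (k + j) := by
            rw [Finset.mul_sum, ← Finset.sum_sub_distrib]
            refine Finset.sum_congr rfl fun j _ => ?_
            rw [hsplit]; ring
        _ = (∑ j ∈ Finset.range (m + 1), (Pl l).coeff j * yfun (a :: l) (k + j + 1))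
            - a * ∑ j ∈ Finset.range (m + 1), (Pl l).coeff j * yfun (a :: l) (k + j) := by
            congr 1
            · rw [Finset.sum_range_succ']
              simp only [coeff_X_mul]
              have h0 : (X * Pl l).coeff 0 = 0 := by
                rw [mul_coeff_zero, coeff_X_zero, zero_mul]
              rw [h0, zero_mul, add_zero]
              exact Finset.sum_congr rfl fun j _ => rfl
            · congr 1
              rw [Finset.sum_range_succ]
              have hc : (Pl l).coeff (m + 1) = 0 :=
                coeff_eq_zero_of_natDegree_lt (by rw [Pl_natDegree]; omega)
              rw [hc, zero_mul, add_zero]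
        _ = ∑ j ∈ Finset.range (m + 1), (Pl l).coeff j * yfun l (k + j) := by
            rw [Finset.mul_sum, ← Finset.sum_sub_distrib]
            refine Finset.sum_congr rfl fun j _ => ?_
            rw [← yshift a l (k + j)]
            ring
        _ = 0 := ih k

lemma Hfun_single (a : ℝ) : ∀ m, Hfun [a] m = a ^ m := by
  intro m
  induction m with
  | zero => rw [Hfun_zero, pow_zero]
  | succ m ih => rw [Hfun, ih, Hfun, pow_succ]; ring

lemma Hbound (ρ : ℝ) (hρ : 0 ≤ ρ) : ∀ l : List ℝ, l ≠ [] → (∀ a ∈ l, |a| ≤ ρ) →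
    ∀ m : ℕ, |Hfun l m| ≤ ((m + (l.length - 1)).choose (l.length - 1) : ℝ) * ρ ^ m := by
  intro l
  induction l with
  | nil => intro h; exact absurd rfl h
  | cons a l ih =>
      intro _ habs m
      have ha : |a| ≤ ρ := habs a (by simp)
      rcases List.eq_nil_or_concat l with hl | hl
      · subst hl
        simp only [List.length_cons, List.length_nil]
        rw [Hfun_single]
        have : |a ^ m| = |a| ^ m := abs_pow a m
        rw [this]
        calc |a| ^ m ≤ ρ ^ m := pow_le_pow_left₀ (abs_nonneg a) ha m
          _ = ((m + (1 - 1)).choose (1 - 1) : ℝ) * ρ ^ m := by simp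
      · have hlne : l ≠ [] := by rcases hl with ⟨l', b, rfl⟩; simp
        obtain ⟨s, hs⟩ : ∃ s, l.length = s + 1 := by
          cases l with
          | nil => exact absurd rfl hlne
          | cons b l' => exact ⟨l'.length, rfl⟩
        have habs' : ∀ b ∈ l, |b| ≤ ρ := fun b hb => habs b (List.mem_cons_of_mem a hb)
        have ihl := ih hlne habs'
        have hlen : (a :: l).length = s + 2 := by simp [hs]
        rw [hlen]
        rw [show s + 2 - 1 = s + 1 from rfl]
        -- target: ∀ m, |Hfun (a::l) m| ≤ C(m + (s+1), s+1) ρ^m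
        induction m with
        | zero =>
            rw [Hfun_zero]
            norm_num
        | succ m ihm =>
            rw [Hfun]
            have h1 : |a * Hfun (a :: l) m + Hfun l (m + 1)|
                ≤ |a| * |Hfun (a :: l) m| + |Hfun l (m + 1)| := by
              calc _ ≤ |a * Hfun (a :: l) m| + |Hfun l (m + 1)| := abs_add_le _ _
                _ = |a| * |Hfun (a :: l) m| + |Hfun l (m + 1)| := by rw [abs_mul]
            have h2 : |a| * |Hfun (a :: l) m| ≤ ρ * (((m + (s + 1)).choose (s + 1) : ℝ) * ρ ^ m) :=
              mul_le_mul ha ihm (abs_nonneg _) hρ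
            have h3 : |Hfun l (m + 1)| ≤ ((m + 1 + s).choose s : ℝ) * ρ ^ (m + 1) := by
              have := ihl (m + 1)
              rwa [hs, Nat.add_sub_cancel] at this
            have hchoose : (m + 1 + (s + 1)).choose (s + 1)
                = (m + (s + 1)).choose (s + 1) + (m + 1 + s).choose s := by
              have h' : m + 1 + (s + 1) = (m + (s + 1)) + 1 := by omega
              have h'' : m + 1 + s = m + (s + 1) := by omega
              rw [h', h'', Nat.choose_succ_succ']
              exact Nat.add_comm _ _
            calc |a * Hfun (a :: l) m + Hfun l (m + 1)|
                ≤ ρ * (((m + (s + 1)).choose (s + 1) : ℝ) * ρ ^ m)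
                  + ((m + 1 + s).choose s : ℝ) * ρ ^ (m + 1) := by
                  refine h1.trans (add_le_add h2 h3)
              _ = (((m + (s + 1)).choose (s + 1) : ℝ) + ((m + 1 + s).choose s : ℝ))
                  * ρ ^ (m + 1) := by rw [pow_succ]; ring
              _ = ((m + 1 + (s + 1)).choose (s + 1) : ℝ) * ρ ^ (m + 1) := by
                  rw [hchoose]; push_cast; ring

theorem stmt15 (n : ℕ) (hn : 1 ≤ n) (ρ : ℝ) (hρ0 : 0 < ρ) (hρ1 : ρ < 1) (L : Fin n → ℝ)
    (hinj : Function.Injective L) (hL : ∀ i, |L i| ≤ ρ) (x : ℕ → ℝ)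
    (hrec : ∀ k : ℕ,
      ∑ j ∈ Finset.range (n + 1),
        (∏ i, (Polynomial.X - Polynomial.C (L i))).coeff j * x (k + j) = 0)
    (hinit0 : ∀ i : ℕ, i < n - 1 → x i = 0) (hinit1 : x (n - 1) = 1) :
    ∀ k : ℕ, n ≤ k → |x k| ≤ (k.choose (n - 1) : ℝ) * ρ ^ (k + 1 - n) := by
  set l : List ℝ := List.ofFn L with hl
  have hlen : l.length = n := by simp [hl]
  have hPl : Pl l = ∏ i, (Polynomial.X - Polynomial.C (L i)) := by
    rw [Pl, hl, List.map_ofFn, List.prod_ofFn]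
    rfl
  have hkey : ∀ k : ℕ, x k = yfun l k := by
    intro k
    induction k using Nat.strong_induction_on with
    | _ k ih =>
      rcases lt_or_ge k n with hk | hk
      · rcases lt_or_ge k (n - 1) with hk1 | hk1
        · rw [hinit0 k hk1]
          unfold yfun
          rw [if_pos (by omega)]
        · have hkeq : k = n - 1 := by omega
          rw [hkeq, hinit1]
          unfold yfun
          rw [if_neg (by omega), hlen]
          have : n - 1 + 1 - n = 0 := by omega
          rw [this, Hfun_zero]
      · have hx := hrec (k - n)
        have hy := rec_y l (k - n)
        rw [← hPl] at hx
        rw [hlen] at hy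
        rw [Finset.sum_range_succ] at hx hy
        have hcn : (Pl l).coeff n = 1 := by
          have := (Pl_monic l).coeff_natDegree
          rwa [Pl_natDegree, hlen] at this
        have hkn : k - n + n = k := by omega
        rw [hcn, one_mul, hkn] at hx hy
        have hsum : ∑ j ∈ Finset.range n, (Pl l).coeff j * x (k - n + j)
            = ∑ j ∈ Finset.range n, (Pl l).coeff j * yfun l (k - n + j) := by
          refine Finset.sum_congr rfl fun j hj => ?_
          rw [ih (k - n + j) (by simp at hj; omega)]
        linarith [hx, hy, hsum.symm ▸ hx]
  intro k hk
  rw [hkey k]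
  unfold yfun
  rw [if_neg (by omega), hlen]
  have hbound := Hbound ρ hρ0.le l (by intro h; rw [h] at hlen; simp at hlen; omega)
    (by intro a ha
        rw [hl, List.mem_ofFn] at ha
        obtain ⟨i, rfl⟩ := ha
        exact hL i) (k + 1 - n)
  rw [hlen] at hbound
  have harith : k + 1 - n + (n - 1) = k := by omega
  rwa [harith] at hbound
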